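/- arXiv:2311.03815 — 5 statements merged into one kernel-verified Lean document; each statement's English description precedes it below -/
import Mathlib

section
/- Suppose a·T̃ ≤ N ≤ a·T̃ + b·T̃·B̃ and N·Δb/(b·Δt) ≥ T̃². Then the boundary point (T̃, (N − a·T̃)/(b·T̃)) belongs to the feasible set F, and it is the unique minimizer of the cost c(x, y) = Δt·x + Δb·y over F. -/
/-- The feasible set
`F = {(x, y) : 0 < x ≤ T̃, 0 ≤ y ≤ B̃, a·x + b·x·y = N}`. -/
def feasibleSet (a b N T B : ℝ) : Set (ℝ × ℝ) :=
  {p : ℝ × ℝ | 0 < p.1 ∧ p.1 ≤ T ∧ 0 ≤ p.2 ∧ p.2 ≤ B ∧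
    a * p.1 + b * p.1 * p.2 = N}

/-- The resource-cost objective `c(x, y) = Δt·x + Δb·y`. -/
def resourceCost (Δt Δb : ℝ) (p : ℝ × ℝ) : ℝ :=
  Δt * p.1 + Δb * p.2


/-- Suppose `a·T̃ ≤ N ≤ a·T̃ + b·T̃·B̃` and
`N·Δb/(b·Δt) ≥ T̃²`. Then the boundary point `(T̃, (N − a·T̃)/(b·T̃))`
belongs to `F` and is the unique minimizer of `c` over `F`. -/
theorem boundary_point_unique_minimizer
    (Δt Δb a b N T B : ℝ) (hΔt : 0 < Δt) (hΔb : 0 < Δb)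
    (ha : 0 < a) (hb : 0 < b) (hN : 0 < N) (hT : 0 < T) (hB : 0 < B)
    (h1 : a * T ≤ N) (h2 : N ≤ a * T + b * T * B)
    (h3 : T ^ 2 ≤ N * Δb / (b * Δt)) :
    (T, (N - a * T) / (b * T)) ∈ feasibleSet a b N T B ∧
    (∀ p ∈ feasibleSet a b N T B, p ≠ (T, (N - a * T) / (b * T)) →
      resourceCost Δt Δb (T, (N - a * T) / (b * T))
        < resourceCost Δt Δb p) := by
  have hbT : (0:ℝ) < b * T := by positivity
  have h3' : T ^ 2 * (b * Δt) ≤ N * Δb := by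
    rwa [le_div_iff₀ (by positivity)] at h3
  constructor
  · refine ⟨hT, le_refl T, ?_, ?_, ?_⟩
    · exact div_nonneg (by linarith) hbT.le
    · rw [div_le_iff₀ hbT]; nlinarith
    · field_simp; ring
  · rintro ⟨x, y⟩ ⟨hx0, hxT, hy0, hyB, heq⟩ hne
    dsimp only at hx0 hxT hy0 hyB heq
    simp only [resourceCost]
    have hbx : (0:ℝ) < b * x := by positivity
    have hy : y = (N - a * x) / (b * x) := by
      field_simp; linarith [heq]
    rcases eq_or_lt_of_le hxT with h | h
    · exfalso; apply hne
      subst h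
      simp only [Prod.mk.injEq]
      exact ⟨trivial, hy⟩
    · -- x < T
      have key : Δt * (b * x * T) < N * Δb := by
        nlinarith [mul_lt_mul_of_pos_left h (mul_pos hΔt hbT)]
      have hdiff : Δb * ((N - a * x) / (b * x)) - Δb * ((N - a * T) / (b * T))
          = Δb * (T - x) * N / (b * x * T) := by
        field_simp; ring
      have hpos : Δt * (T - x) < Δb * (T - x) * N / (b * x * T) := by
        rw [lt_div_iff₀ (by positivity)]
        have hTx : 0 < T - x := by linarith
        nlinarith
      rw [hy]
      linarith [hdiff, hpos]
end

section
/- Suppose a²·Δb/(b·Δt) ≤ N, N ≤ T̃²·b·Δt/Δb, and N ≤ (a + b·B̃)²·Δb/(b·Δt). Then the interior point (x₁, y₁) with x₁ = √(N·Δb/(b·Δt)) and y₁ = (√(N·b·Δt/Δb) − a)/b belongs to the feasible set F, and it is the unique minimizer of the cost c(x, y) = Δt·x + Δb·y over F. -/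
/-- Suppose `a²·Δb/(b·Δt) ≤ N`, `N ≤ T̃²·b·Δt/Δb` and
`N ≤ (a + b·B̃)²·Δb/(b·Δt)`. Then the interior point `(x₁, y₁)` with
`x₁ = √(N·Δb/(b·Δt))` and `y₁ = (√(N·b·Δt/Δb) − a)/b` belongs to `F` and
is the unique minimizer of `c` over `F`. -/
theorem interior_point_unique_minimizer
    (Δt Δb a b N T B : ℝ) (hΔt : 0 < Δt) (hΔb : 0 < Δb)
    (ha : 0 < a) (hb : 0 < b) (hN : 0 < N) (hT : 0 < T) (hB : 0 < B)
    (h1 : a ^ 2 * Δb / (b * Δt) ≤ N)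
    (h2 : N ≤ T ^ 2 * b * Δt / Δb)
    (h3 : N ≤ (a + b * B) ^ 2 * Δb / (b * Δt)) :
    (Real.sqrt (N * Δb / (b * Δt)),
      (Real.sqrt (N * b * Δt / Δb) - a) / b) ∈ feasibleSet a b N T B ∧
    (∀ p ∈ feasibleSet a b N T B,
      p ≠ (Real.sqrt (N * Δb / (b * Δt)),
            (Real.sqrt (N * b * Δt / Δb) - a) / b) →
      resourceCost Δt Δb
          (Real.sqrt (N * Δb / (b * Δt)),
            (Real.sqrt (N * b * Δt / Δb) - a) / b)
        < resourceCost Δt Δb p) := by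

  set x₁ := Real.sqrt (N * Δb / (b * Δt)) with hx1def
  set s := Real.sqrt (N * b * Δt / Δb) with hsdef
  have hbt : 0 < b * Δt := mul_pos hb hΔt
  have harg1 : 0 < N * Δb / (b * Δt) := by positivity
  have harg2 : 0 < N * b * Δt / Δb := by positivity
  have hx1pos : 0 < x₁ := Real.sqrt_pos.mpr harg1
  have hspos : 0 < s := Real.sqrt_pos.mpr harg2
  have hx1sq : x₁ ^ 2 = N * Δb / (b * Δt) := Real.sq_sqrt harg1.le
  have hssq : s ^ 2 = N * b * Δt / Δb := Real.sq_sqrt harg2.le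
  have hx1s : x₁ * s = N := by
    rw [hx1def, hsdef, ← Real.sqrt_mul harg1.le]
    have : N * Δb / (b * Δt) * (N * b * Δt / Δb) = N ^ 2 := by
      field_simp
    rw [this, Real.sqrt_sq hN.le]
  have hsa : a ≤ s := by
    have : a = Real.sqrt (a ^ 2) := (Real.sqrt_sq ha.le).symm
    rw [this, hsdef]
    apply Real.sqrt_le_sqrt
    rw [div_le_iff₀ hbt] at h1
    rw [le_div_iff₀ hΔb]
    nlinarith
  have hsB : s ≤ a + b * B := by
    have h0 : 0 ≤ a + b * B := by positivity
    have : a + b * B = Real.sqrt ((a + b * B) ^ 2) := (Real.sqrt_sq h0).symm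
    rw [this, hsdef]
    apply Real.sqrt_le_sqrt
    rw [le_div_iff₀ hbt] at h3
    rw [div_le_iff₀ hΔb]
    nlinarith
  have hx1T : x₁ ≤ T := by
    have : T = Real.sqrt (T ^ 2) := (Real.sqrt_sq hT.le).symm
    rw [this, hx1def]
    apply Real.sqrt_le_sqrt
    rw [le_div_iff₀ hΔb] at h2
    rw [div_le_iff₀ hbt]
    nlinarith
  clear hx1def hsdef h1 h2 h3
  clear_value x₁ s
  have hy1 : 0 ≤ (s - a) / b := div_nonneg (by linarith) hb.le
  have hy1B : (s - a) / b ≤ B := by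
    rw [div_le_iff₀ hb]; linarith
  have hconstr : a * x₁ + b * x₁ * ((s - a) / b) = N := by
    field_simp
    nlinarith [hx1s]
  have hmem : (x₁, (s - a) / b) ∈ feasibleSet a b N T B :=
    ⟨hx1pos, hx1T, hy1, hy1B, hconstr⟩
  refine ⟨hmem, ?_⟩
  rintro ⟨x, y⟩ ⟨hx, hxT, hy, hyB, hc⟩ hne
  simp only [resourceCost]
  by_cases hxx : x = x₁
  · exfalso
    have hcx : a * x₁ + b * x₁ * y = N := hxx ▸ hc
    have heq : b * x₁ * y = b * x₁ * ((s - a) / b) := by linarith [hconstr, hcx]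
    have hy' : y = (s - a) / b := mul_left_cancel₀ (mul_pos hb hx1pos).ne' heq
    exact hne (by rw [hxx, hy'])
  · have hsub : (x - x₁) ^ 2 > 0 := by
      have := sub_ne_zero.mpr hxx
      positivity
    have hNb : b * Δt * x₁ ^ 2 = N * Δb := by
      rw [hx1sq]; field_simp
    have hy1c : b * x₁ * ((s - a) / b) = N - a * x₁ := by linarith [hconstr]
    have hyc : b * x * y = N - a * x := by linarith [hc]
    -- cost difference times (b * x * x₁) equals b*Δt*x₁*(x-x₁)^2
    have key : (Δt * x + Δb * y - (Δt * x₁ + Δb * ((s - a) / b))) * (b * x * x₁)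
        = b * Δt * x₁ * (x - x₁) ^ 2 := by
      have e1 : Δb * y * (b * x * x₁) = Δb * x₁ * (N - a * x) := by
        linear_combination Δb * x₁ * hyc
      have e2 : Δb * ((s - a) / b) * (b * x * x₁) = Δb * x * (N - a * x₁) := by
        have : Δb * ((s - a) / b) * (b * x * x₁) = Δb * x * (b * x₁ * ((s - a) / b)) := by
          field_simp
        rw [this, hy1c]
      linear_combination e1 - e2 + (x - x₁) * hNb
    have hpos : 0 < b * Δt * x₁ * (x - x₁) ^ 2 := by positivity
    have hprod : 0 < b * x * x₁ := by positivity
    clear hmem hne harg1 harg2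
    have h' : 0 < (Δt * x + Δb * y - (Δt * x₁ + Δb * ((s - a) / b))) * (b * x * x₁) := by
      rw [key]; exact hpos
    have hdiff : 0 < Δt * x + Δb * y - (Δt * x₁ + Δb * ((s - a) / b)) := by
      rcases mul_pos_iff.mp h' with ⟨h1, _⟩ | ⟨_, h2⟩
      · exact h1
      · linarith
    linarith
end

section
/- (Constrained universal resource scheduling.) Whenever the workload N satisfies 0 < N ≤ a·T̃ + b·T̃·B̃, the resource cost c(x, y) = Δt·x + Δb·y attains its minimum over the feasible set F, and the minimizer is unique: there exists exactly one point (x*, y*) ∈ F with c(x*, y*) ≤ c(x, y) for all (x, y) ∈ F. -/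
lemma gconv (Δt Δb a b N : ℝ) (hΔb : 0 < Δb) (hb : 0 < b) (hN : 0 < N)
    (x y : ℝ) (hx : 0 < x) (hy : 0 < y) (hxy : x ≠ y) :
    Δt * ((x+y)/2) + Δb * ((N - a*((x+y)/2))/(b*((x+y)/2))) <
      ((Δt * x + Δb * ((N - a*x)/(b*x))) + (Δt * y + Δb * ((N - a*y)/(b*y))))/2 := by
  have h1 : (0:ℝ) < x + y := by linarith
  have h2 : 0 < (x-y)^2 := by have := sub_ne_zero.mpr hxy; positivity
  have hx' := hx.ne'
  have hy' := hy.ne'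
  have hb' := hb.ne'
  have h1' := h1.ne'
  field_simp
  nlinarith [mul_pos (mul_pos (mul_pos hΔb hN) h2) (mul_pos hb hb), mul_pos hx hy,
    mul_pos hb h1, sq_nonneg (x-y), mul_pos (mul_pos hΔb hN) h2]

/-- Constrained universal resource scheduling: whenever
`0 < N ≤ a·T̃ + b·T̃·B̃`, the cost `c` attains its minimum over `F` at a
unique point. -/
theorem constrained_scheduling_exists_unique_minimizer
    (Δt Δb a b N T B : ℝ) (hΔt : 0 < Δt) (hΔb : 0 < Δb)
    (ha : 0 < a) (hb : 0 < b) (hN : 0 < N) (hT : 0 < T) (hB : 0 < B)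
    (hle : N ≤ a * T + b * T * B) :
    ∃! p : ℝ × ℝ, p ∈ feasibleSet a b N T B ∧
      ∀ q ∈ feasibleSet a b N T B,
        resourceCost Δt Δb p ≤ resourceCost Δt Δb q := by
  set g : ℝ → ℝ := fun x => Δt * x + Δb * ((N - a*x)/(b*x)) with hg
  set L : ℝ := N / (a + b*B) with hLdef
  set U : ℝ := min T (N/a) with hUdef
  have habB : 0 < a + b*B := by positivity
  have hL : 0 < L := by positivity
  have hLT : L ≤ T := by
    rw [hLdef, div_le_iff₀ habB]; nlinarith
  have hLNa : L ≤ N/a := by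
    rw [hLdef]
    rw [div_le_div_iff₀ habB ha]; nlinarith [mul_pos hN (mul_pos hb hB)]
  have hLU : L ≤ U := le_min hLT hLNa
  -- characterization of feasibility
  have hfeas : ∀ p : ℝ × ℝ, p ∈ feasibleSet a b N T B ↔
      (L ≤ p.1 ∧ p.1 ≤ U ∧ p.2 = (N - a*p.1)/(b*p.1)) := by
    intro ⟨x, y⟩
    simp only [feasibleSet, Set.mem_setOf_eq, hUdef, le_min_iff]
    constructor
    · rintro ⟨hx0, hxT, hy0, hyB, hc⟩
      have hbx : 0 < b * x := by positivity
      refine ⟨?_, ⟨hxT, ?_⟩, ?_⟩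
      · rw [hLdef, div_le_iff₀ habB]; nlinarith
      · rw [le_div_iff₀ ha]; nlinarith
      · field_simp; linarith
    · rintro ⟨hLx, ⟨hxT, hxNa⟩, hy⟩
      have hx0 : 0 < x := lt_of_lt_of_le hL hLx
      have hbx : 0 < b * x := by positivity
      have haxN : a * x ≤ N := by rw [mul_comm]; exact (le_div_iff₀ ha).mp hxNa
      have hNx : N ≤ x * (a + b*B) := by rwa [hLdef, div_le_iff₀ habB] at hLx
      refine ⟨hx0, hxT, ?_, ?_, ?_⟩
      · rw [hy]; exact div_nonneg (by linarith) (by positivity)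
      · rw [hy, div_le_iff₀ hbx]; nlinarith
      · rw [hy]; field_simp; ring
  -- cost on feasible points
  have hcost : ∀ p : ℝ × ℝ, p ∈ feasibleSet a b N T B → resourceCost Δt Δb p = g p.1 := by
    intro p hp
    rw [hfeas] at hp
    simp only [resourceCost, hg, hp.2.2]
  -- existence of a minimizer of g on Icc L U
  have hcont : ContinuousOn g (Set.Icc L U) := by
    apply ContinuousOn.add (continuousOn_const.mul continuousOn_id)
    apply ContinuousOn.mul continuousOn_const
    apply ContinuousOn.div
    · fun_prop
    · fun_prop
    · intro x hx
      have : 0 < x := lt_of_lt_of_le hL hx.1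
      positivity
  obtain ⟨x₀, hx₀mem, hx₀min⟩ := (isCompact_Icc).exists_isMinOn (Set.nonempty_Icc.mpr hLU) hcont
  set p₀ : ℝ × ℝ := (x₀, (N - a*x₀)/(b*x₀)) with hp₀
  have hp₀feas : p₀ ∈ feasibleSet a b N T B := by
    rw [hfeas]; exact ⟨hx₀mem.1, hx₀mem.2, rfl⟩
  have hp₀min : ∀ q ∈ feasibleSet a b N T B, resourceCost Δt Δb p₀ ≤ resourceCost Δt Δb q := by
    intro q hq
    rw [hcost p₀ hp₀feas, hcost q hq]
    exact hx₀min ((hfeas q).mp hq |>.imp id (fun h => h.1) |> fun h => Set.mem_Icc.mpr h)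
  refine ⟨p₀, ⟨hp₀feas, hp₀min⟩, ?_⟩
  rintro q ⟨hqfeas, hqmin⟩
  have hq1 := (hfeas q).mp hqfeas
  have hx₀pos : 0 < x₀ := lt_of_lt_of_le hL hx₀mem.1
  have hq1pos : 0 < q.1 := lt_of_lt_of_le hL hq1.1
  have heq : g q.1 = g x₀ := by
    have h1 : resourceCost Δt Δb p₀ ≤ resourceCost Δt Δb q := hp₀min q hqfeas
    have h2 : resourceCost Δt Δb q ≤ resourceCost Δt Δb p₀ := hqmin p₀ hp₀feas
    have := le_antisymm h2 h1
    rwa [hcost q hqfeas, hcost p₀ hp₀feas] at this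
  have hx : q.1 = x₀ := by
    by_contra hne
    set m : ℝ := (q.1 + x₀)/2 with hm
    have hmmem : m ∈ Set.Icc L U := by
      constructor
      · rw [hm]; have := hq1.1; have := hx₀mem.1; linarith
      · rw [hm]; have := hq1.2.1; have := hx₀mem.2; linarith
    have hmfeas : ((m, (N - a*m)/(b*m)) : ℝ × ℝ) ∈ feasibleSet a b N T B := by
      rw [hfeas]; exact ⟨hmmem.1, hmmem.2, rfl⟩
    have hlt : g m < (g q.1 + g x₀)/2 :=
      gconv Δt Δb a b N hΔb hb hN q.1 x₀ hq1pos hx₀pos hne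
    have : g x₀ ≤ g m := hx₀min hmmem
    rw [heq] at hlt
    simp only [hg] at hlt this
    linarith
  have hy : q.2 = p₀.2 := by rw [hq1.2.2, hx, hp₀]
  exact Prod.ext hx hy
end

section
/- The minimum of the cost c over the feasible set F has the following piecewise form: if a²·Δb/(b·Δt) ≤ N ≤ min(T̃²·b·Δt/Δb, (a + b·B̃)²·Δb/(b·Δt)) then the minimum equals 2·√(N·Δt·Δb/b) − a·Δb/b, while if max(a·T̃, T̃²·b·Δt/Δb) ≤ N ≤ a·T̃ + b·T̃·B̃ then the minimum equals Δt·T̃ + Δb·(N − a·T̃)/(b·T̃). -/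
set_option maxHeartbeats 1000000

/-- Piecewise form of the minimum of `c` over `F`:
if `a²·Δb/(b·Δt) ≤ N ≤ min(T̃²·b·Δt/Δb, (a + b·B̃)²·Δb/(b·Δt))` the minimum
equals `2·√(N·Δt·Δb/b) − a·Δb/b`; if
`max(a·T̃, T̃²·b·Δt/Δb) ≤ N ≤ a·T̃ + b·T̃·B̃` the minimum equals
`Δt·T̃ + Δb·(N − a·T̃)/(b·T̃)`. -/
theorem piecewise_minimum_cost
    (Δt Δb a b N T B : ℝ) (hΔt : 0 < Δt) (hΔb : 0 < Δb)
    (ha : 0 < a) (hb : 0 < b) (hN : 0 < N) (hT : 0 < T) (hB : 0 < B) :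
    ((a ^ 2 * Δb / (b * Δt) ≤ N →
      N ≤ min (T ^ 2 * b * Δt / Δb) ((a + b * B) ^ 2 * Δb / (b * Δt)) →
      IsLeast (resourceCost Δt Δb '' feasibleSet a b N T B)
        (2 * Real.sqrt (N * Δt * Δb / b) - a * Δb / b)) ∧
     (max (a * T) (T ^ 2 * b * Δt / Δb) ≤ N → N ≤ a * T + b * T * B →
      IsLeast (resourceCost Δt Δb '' feasibleSet a b N T B)
        (Δt * T + Δb * (N - a * T) / (b * T)))) := by
  have hbne : b ≠ 0 := hb.ne'
  have hΔtne : Δt ≠ 0 := hΔt.ne'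
  constructor
  · intro h1 h2
    rw [le_min_iff] at h2
    obtain ⟨h2T, h2B⟩ := h2
    obtain ⟨s, hs_def⟩ : ∃ s, s = Real.sqrt (N * Δt * Δb / b) := ⟨_, rfl⟩
    rw [← hs_def]
    have hspos : 0 < s := hs_def ▸ Real.sqrt_pos.mpr (by positivity)
    have hssq : s ^ 2 = N * Δt * Δb / b := hs_def ▸ Real.sq_sqrt (by positivity)
    clear hs_def
    have hbs : b * s ^ 2 = N * Δt * Δb := by rw [hssq]; field_simp
    obtain ⟨x0, hx0_def⟩ : ∃ x0, x0 = Real.sqrt (N * Δb / (b * Δt)) := ⟨_, rfl⟩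
    have hx0pos : 0 < x0 := hx0_def ▸ Real.sqrt_pos.mpr (by positivity)
    have hx0sq : x0 ^ 2 = N * Δb / (b * Δt) := hx0_def ▸ Real.sq_sqrt (by positivity)
    clear hx0_def
    have hx0sq' : x0 ^ 2 * (b * Δt) = N * Δb := by
      rw [hx0sq]; field_simp
    have hΔtx0 : Δt * x0 = s := by
      have hsq : (Δt * x0) ^ 2 = s ^ 2 := by
        rw [hssq]; field_simp [mul_pow]; nlinarith [hx0sq']
      nlinarith [mul_pos hΔt hx0pos, hspos]
    -- multiply out hypotheses
    have h1' : a ^ 2 * Δb ≤ N * (b * Δt) := (div_le_iff₀ (by positivity)).mp h1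
    have h2T' : N * Δb ≤ T ^ 2 * b * Δt := by
      rw [le_div_iff₀ hΔb] at h2T; nlinarith
    have h2B' : N * (b * Δt) ≤ (a + b * B) ^ 2 * Δb := by
      rw [le_div_iff₀ (by positivity)] at h2B; nlinarith
    -- a * x0 ≤ N
    have haxsq : (a * x0) ^ 2 ≤ N ^ 2 := by
      nlinarith [mul_le_mul_of_nonneg_right h1' (sq_nonneg x0), hx0sq', hΔb]
    have hax0 : a * x0 ≤ N := by
      nlinarith [haxsq, mul_pos ha hx0pos, hN]
    -- x0 ≤ T
    have hx0T : x0 ≤ T := by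
      have : x0 ^ 2 ≤ T ^ 2 := by nlinarith [hx0sq', h2T', mul_pos hb hΔt]
      nlinarith [this, hx0pos, hT]
    -- N ≤ (a + b*B) * x0
    have hNsq : N ^ 2 ≤ ((a + b * B) * x0) ^ 2 := by
      nlinarith [mul_le_mul_of_nonneg_right h2B' (sq_nonneg x0), hx0sq', hΔb]
    have hNle : N ≤ (a + b * B) * x0 := by
      nlinarith [hNsq, mul_pos (show (0:ℝ) < a + b * B by positivity) hx0pos, hN]
    have hbx0 : 0 < b * x0 := mul_pos hb hx0pos
    have hx0ne : x0 ≠ 0 := hx0pos.ne'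
    constructor
    · refine ⟨(x0, (N - a * x0) / (b * x0)), ⟨hx0pos, hx0T, ?_, ?_, ?_⟩, ?_⟩
      · exact div_nonneg (by linarith) hbx0.le
      · rw [div_le_iff₀ hbx0]; nlinarith
      · show a * x0 + b * x0 * ((N - a * x0) / (b * x0)) = N
        field_simp
        ring
      · show Δt * x0 + Δb * ((N - a * x0) / (b * x0)) = 2 * s - a * Δb / b
        field_simp
        linear_combination (-1) * hx0sq' + (2 * b * x0) * hΔtx0
    · rintro v ⟨⟨x, y⟩, ⟨hx, hxT, hy, hyB, hcon⟩, rfl⟩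
      dsimp only at hx hxT hy hyB hcon
      show 2 * s - a * Δb / b ≤ Δt * x + Δb * y
      have hbx : 0 < b * x := mul_pos hb hx
      have key : 2 * s * b * x ≤ Δt * b * x ^ 2 + Δb * N := by
        nlinarith [mul_nonneg hb.le (sq_nonneg (Δt * x - s)), hbs, hΔt]
      have expand : (2 * s - a * Δb / b) * (b * x) = 2 * s * b * x - a * Δb * x := by
        field_simp
      have hbxyΔb : Δb * (b * x * y) = Δb * (N - a * x) := by
        rw [show b * x * y = N - a * x by linarith]
      have h2 : (2 * s - a * Δb / b) * (b * x) ≤ (Δt * x + Δb * y) * (b * x) := by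
        rw [expand]
        nlinarith [key, hbxyΔb]
      exact le_of_mul_le_mul_right h2 hbx
  · intro h1 h2
    rw [max_le_iff] at h1
    obtain ⟨h1a, h1T⟩ := h1
    have h1T' : T ^ 2 * b * Δt ≤ N * Δb := by
      rw [div_le_iff₀ hΔb] at h1T; nlinarith
    have hbT : 0 < b * T := mul_pos hb hT
    have hTne : T ≠ 0 := hT.ne'
    constructor
    · refine ⟨(T, (N - a * T) / (b * T)), ⟨hT, le_refl T, ?_, ?_, ?_⟩, ?_⟩
      · exact div_nonneg (by linarith) hbT.le
      · rw [div_le_iff₀ hbT]; nlinarith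
      · show a * T + b * T * ((N - a * T) / (b * T)) = N
        field_simp
        ring
      · show Δt * T + Δb * ((N - a * T) / (b * T)) = Δt * T + Δb * (N - a * T) / (b * T)
        ring
    · rintro v ⟨⟨x, y⟩, ⟨hx, hxT, hy, hyB, hcon⟩, rfl⟩
      dsimp only at hx hxT hy hyB hcon
      show Δt * T + Δb * (N - a * T) / (b * T) ≤ Δt * x + Δb * y
      have hbxT : 0 < b * x * T := by positivity
      have hbxy : b * x * y = N - a * x := by linarith
      have hbxyT : Δb * (b * x * y) * T = Δb * (N - a * x) * T := by rw [hbxy]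
      have key : 0 ≤ (T - x) * (Δb * N - Δt * b * T * x) := by
        apply mul_nonneg (by linarith)
        nlinarith [mul_nonneg (mul_nonneg (mul_pos hΔt hb).le hT.le)
          (sub_nonneg.mpr hxT), h1T']
      have expand : (Δt * T + Δb * (N - a * T) / (b * T)) * (b * x * T) =
          Δt * T * (b * x * T) + Δb * (N - a * T) * x := by
        field_simp
      have h2 : (Δt * T + Δb * (N - a * T) / (b * T)) * (b * x * T) ≤
          (Δt * x + Δb * y) * (b * x * T) := by
        rw [expand]
        nlinarith [key, hbxyT]
      exact le_of_mul_le_mul_right h2 hbxT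
end

section
/- Let x₀ = √(N·Δb/(b·Δt)). If x₀ ≤ T̃ (and a²·Δb/(b·Δt) ≤ N ≤ (a + b·B̃)²·Δb/(b·Δt), so that the corresponding bandwidth is admissible), then the minimum of c over the feasible set F equals the unconstrained minimum 2·√(N·Δt·Δb/b) − a·Δb/b; if instead x₀ > T̃, then the constrained minimum of c over F is strictly larger than the unconstrained minimum 2·√(N·Δt·Δb/b) − a·Δb/b. -/
lemma amgm_aux (u v : ℝ) (hu : 0 ≤ u) (hv : 0 ≤ v) :
    2 * Real.sqrt (u * v) ≤ u + v := by
  nlinarith [Real.sq_sqrt hu, Real.sq_sqrt hv, sq_nonneg (Real.sqrt u - Real.sqrt v),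
    Real.sqrt_mul hu v, Real.sqrt_nonneg u, Real.sqrt_nonneg v]

lemma amgm_strict_aux (u v : ℝ) (hu : 0 < u) (hv : 0 < v) (hne : u ≠ v) :
    2 * Real.sqrt (u * v) < u + v := by
  have h1 : Real.sqrt u ≠ Real.sqrt v := by
    intro h
    apply hne
    have := congrArg (fun t => t ^ 2) h
    simpa [Real.sq_sqrt hu.le, Real.sq_sqrt hv.le] using this
  have h2 : 0 < (Real.sqrt u - Real.sqrt v) ^ 2 :=
    lt_of_le_of_ne (sq_nonneg _) (Ne.symm (pow_ne_zero 2 (sub_ne_zero.2 h1)))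
  nlinarith [Real.sq_sqrt hu.le, Real.sq_sqrt hv.le, sq_nonneg (Real.sqrt u - Real.sqrt v),
    Real.sqrt_mul hu.le v, h2]

set_option maxHeartbeats 1000000 in
/-- Let `x₀ = √(N·Δb/(b·Δt))`. If `x₀ ≤ T̃` (and
`a²·Δb/(b·Δt) ≤ N ≤ (a + b·B̃)²·Δb/(b·Δt)`), then the minimum of `c` over
`F` equals the unconstrained minimum `2·√(N·Δt·Δb/b) − a·Δb/b`; if instead
`x₀ > T̃`, then the constrained minimum of `c` over `F` is strictly larger
than `2·√(N·Δt·Δb/b) − a·Δb/b`. -/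
theorem constrained_vs_unconstrained_minimum
    (Δt Δb a b N T B : ℝ) (hΔt : 0 < Δt) (hΔb : 0 < Δb)
    (ha : 0 < a) (hb : 0 < b) (hN : 0 < N) (hT : 0 < T) (hB : 0 < B)
    (hne : (feasibleSet a b N T B).Nonempty) :
    ((Real.sqrt (N * Δb / (b * Δt)) ≤ T →
      a ^ 2 * Δb / (b * Δt) ≤ N →
      N ≤ (a + b * B) ^ 2 * Δb / (b * Δt) →
      IsLeast (resourceCost Δt Δb '' feasibleSet a b N T B)
        (2 * Real.sqrt (N * Δt * Δb / b) - a * Δb / b)) ∧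
     (T < Real.sqrt (N * Δb / (b * Δt)) →
      ∀ p ∈ feasibleSet a b N T B,
        2 * Real.sqrt (N * Δt * Δb / b) - a * Δb / b
          < resourceCost Δt Δb p)) := by
  have hq : 0 < N * Δb / (b * Δt) := by positivity
  set x0 := Real.sqrt (N * Δb / (b * Δt)) with hx0def
  have hx0pos : 0 < x0 := Real.sqrt_pos.2 hq
  have hx0sq : x0 ^ 2 = N * Δb / (b * Δt) := Real.sq_sqrt hq.le
  have hx0sq' : Δt * b * x0 ^ 2 = N * Δb := by
    rw [hx0sq]; field_simp
  -- √(N·Δt·Δb/b) = Δt * x0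
  have hsq2 : Real.sqrt (N * Δt * Δb / b) = Δt * x0 := by
    have h1 : N * Δt * Δb / b = (Δt * x0) ^ 2 := by
      have hb' : b ≠ 0 := hb.ne'
      field_simp
      nlinarith [hx0sq']
    rw [h1, Real.sqrt_sq (by positivity)]
  -- general identity on feasible points
  have cost_eq : ∀ x y : ℝ, 0 < x → a * x + b * x * y = N →
      Δt * x + Δb * y = Δt * x + N * Δb / (b * x) - a * Δb / b := by
    intro x y hx hcon
    have hx' : x ≠ 0 := hx.ne'
    have hb' : b ≠ 0 := hb.ne'
    field_simp
    linear_combination Δb * hcon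
  have uv_eq : ∀ x : ℝ, 0 < x → (Δt * x) * (N * Δb / (b * x)) = N * Δt * Δb / b := by
    intro x hx
    field_simp
  -- lower bound (non-strict) for all feasible points
  have lower : ∀ x y : ℝ, 0 < x → a * x + b * x * y = N →
      2 * Real.sqrt (N * Δt * Δb / b) - a * Δb / b ≤ Δt * x + Δb * y := by
    intro x y hx hcon
    rw [cost_eq x y hx hcon]
    have h := amgm_aux (Δt * x) (N * Δb / (b * x)) (by positivity) (by positivity)
    rw [uv_eq x hx] at h
    linarith
  constructor
  · intro hxT h1 h2
    -- the minimizer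
    have h1' : a ^ 2 * Δb ≤ N * (b * Δt) := by
      rw [div_le_iff₀ (by positivity)] at h1; exact h1
    have h2' : N * (b * Δt) ≤ (a + b * B) ^ 2 * Δb := by
      rw [le_div_iff₀ (by positivity)] at h2; exact h2
    have hax0 : a * x0 ≤ N := by
      have e1 : a ^ 2 * (Δt * b * x0 ^ 2) = a ^ 2 * (N * Δb) := by rw [hx0sq']
      have h3 : (a * x0) ^ 2 ≤ N ^ 2 := by
        nlinarith [e1, mul_le_mul_of_nonneg_left h1' hN.le, mul_pos hΔt hb]
      have h4 := Real.sqrt_le_sqrt h3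
      rwa [Real.sqrt_sq (by positivity), Real.sqrt_sq hN.le] at h4
    have habB : 0 < a + b * B := by positivity
    have hx0B : N ≤ (a + b * B) * x0 := by
      have e1 : (a + b * B) ^ 2 * (Δt * b * x0 ^ 2) = (a + b * B) ^ 2 * (N * Δb) := by
        rw [hx0sq']
      have h3 : N ^ 2 ≤ ((a + b * B) * x0) ^ 2 := by
        nlinarith [e1, mul_le_mul_of_nonneg_left h2' hN.le, mul_pos hΔt hb]
      have h4 := Real.sqrt_le_sqrt h3
      rwa [Real.sqrt_sq hN.le, Real.sqrt_sq (by positivity)] at h4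
    set y0 := (N - a * x0) / (b * x0) with hy0def
    have hy0nn : 0 ≤ y0 := div_nonneg (by linarith) (by positivity)
    have hy0B : y0 ≤ B := by
      rw [hy0def, div_le_iff₀ (by positivity)]
      nlinarith
    have hcon0 : a * x0 + b * x0 * y0 = N := by
      rw [hy0def]
      field_simp
      ring
    constructor
    · refine ⟨(x0, y0), ⟨hx0pos, hxT, hy0nn, hy0B, hcon0⟩, ?_⟩
      show Δt * x0 + Δb * y0 = _
      rw [cost_eq x0 y0 hx0pos hcon0, hsq2]
      have hNx0 : N * Δb / (b * x0) = Δt * x0 := by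
        rw [div_eq_iff (by positivity : (b * x0) ≠ 0)]
        linear_combination -hx0sq' 
      rw [hNx0]; ring
    · rintro z ⟨⟨x, y⟩, ⟨hx, hxT', hy, hyB, hcon⟩, rfl⟩
      exact lower x y hx hcon
  · intro hTx0 ⟨x, y⟩ ⟨hx, hxT', hy, hyB, hcon⟩
    dsimp only at hx hxT' hy hyB hcon
    show _ < Δt * x + Δb * y
    rw [cost_eq x y hx hcon]
    have hne' : Δt * x ≠ N * Δb / (b * x) := by
      intro h
      have h' : Δt * x * (b * x) = N * Δb := by
        rw [h]; field_simp
      have hx2 : x ^ 2 = x0 ^ 2 := by nlinarith [h', hx0sq', mul_pos hΔt hb]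
      have hxx0 : x = x0 := by
        rw [← Real.sqrt_sq hx.le, ← Real.sqrt_sq hx0pos.le, hx2]
      linarith [hxT', hTx0]
    have h := amgm_strict_aux (Δt * x) (N * Δb / (b * x)) (by positivity) (by positivity) hne'
    rw [uv_eq x hx] at h
    linarith
end
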